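/- Optimality of the SIM for pure GU state sets: Let |φ⟩ be a unit vector in ℂ^n, G = {U_1,…,U_m} a finite group of n×n unitary matrices, and consider the pure GU state set ρ_i = |φ_i⟩⟨φ_i| with |φ_i⟩ = U_i|φ⟩ and equal priors 1/m; assume Δ = (1/m)Σ_i |φ_i⟩⟨φ_i| is invertible and let λ_min be its smallest eigenvalue. Then for every β with 1 − nλ_min ≤ β < 1, the SIM with γ = √((1−β)/n) is a measurement with P_I = β and maximizes P_D among all measurements with P_I = β. -/

import Mathlib

open Matrix BigOperators ComplexOrder

lemma aux_mul_vecMulVec_mul {d e : ℕ} (A : Matrix (Fin d) (Fin e) ℂ) (x : Fin e → ℂ) :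
    A * Matrix.vecMulVec x (star x) * Aᴴ
      = Matrix.vecMulVec (A *ᵥ x) (star (A *ᵥ x)) := by
  ext i j
  simp only [mul_apply, vecMulVec_apply, Pi.star_apply, mulVec, dotProduct,
    conjTranspose_apply, Finset.sum_mul, Finset.mul_sum, star_sum, star_mul']
  refine Finset.sum_congr rfl fun l _ => Finset.sum_congr rfl fun k _ => by ring

lemma aux_trace_mul_vecMulVec {d : ℕ} (A : Matrix (Fin d) (Fin d) ℂ) (x : Fin d → ℂ) :
    (A * Matrix.vecMulVec x (star x)).trace = star x ⬝ᵥ (A *ᵥ x) := by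
  simp only [trace, diag, mul_apply, vecMulVec_apply, Pi.star_apply, dotProduct, mulVec,
    Finset.mul_sum]
  exact Finset.sum_congr rfl fun l _ => Finset.sum_congr rfl fun k _ => by ring

lemma aux_trace_vecMulVec {d : ℕ} (x : Fin d → ℂ) :
    (Matrix.vecMulVec x (star x)).trace = star x ⬝ᵥ x := by
  simp only [trace, diag, vecMulVec_apply, Pi.star_apply, dotProduct]
  exact Finset.sum_congr rfl fun l _ => by ring

lemma aux_vecMulVec_mulVec {d : ℕ} (x y v : Fin d → ℂ) :
    Matrix.vecMulVec x y *ᵥ v = (y ⬝ᵥ v) • x := by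
  ext i
  simp only [mulVec, vecMulVec_apply, dotProduct, Pi.smul_apply, smul_eq_mul, Finset.sum_mul,
    Finset.mul_sum]
  exact Finset.sum_congr rfl fun l _ => by ring

lemma aux_vecMulVec_hermitian {d : ℕ} (x : Fin d → ℂ) :
    (Matrix.vecMulVec x (star x)).IsHermitian := by
  ext i j
  simp [conjTranspose_apply, vecMulVec_apply, mul_comm]

lemma aux_vecMulVec_posSemidef {d : ℕ} (x : Fin d → ℂ) :
    (Matrix.vecMulVec x (star x)).PosSemidef := by
  refine PosSemidef.of_dotProduct_mulVec_nonneg (aux_vecMulVec_hermitian x) fun v => ?_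
  rw [aux_vecMulVec_mulVec]
  rw [dotProduct_smul]
  have h1 : star x ⬝ᵥ v = star (star v ⬝ᵥ x) := by
    simp [dotProduct, Finset.mul_sum, mul_comm]
  rw [h1, smul_eq_mul, mul_comm]
  exact mul_star_self_nonneg _

lemma aux_dot_star_comm {d : ℕ} (w x : Fin d → ℂ) :
    star x ⬝ᵥ w = star (star w ⬝ᵥ x) := by
  simp [dotProduct, Finset.mul_sum, mul_comm]

lemma aux_inner_equiv_symm {d : ℕ} (x y : Fin d → ℂ) :
    inner ℂ ((WithLp.equiv 2 _).symm x : EuclideanSpace ℂ (Fin d)) ((WithLp.equiv 2 _).symm y)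
      = star x ⬝ᵥ y := by
  rw [dotProduct_comm]; rfl

lemma aux_cs {d : ℕ} (w : Fin d → ℂ) :
    (((star w ⬝ᵥ w) • 1 - Matrix.vecMulVec w (star w)) : Matrix (Fin d) (Fin d) ℂ).PosSemidef := by
  set w' : EuclideanSpace ℂ (Fin d) := (WithLp.equiv 2 _).symm w with hw'
  have hermM : ((star w ⬝ᵥ w) • 1 - Matrix.vecMulVec w (star w) : Matrix (Fin d) (Fin d) ℂ).IsHermitian := by
    have h1 : (Matrix.vecMulVec w (star w)).IsHermitian := aux_vecMulVec_hermitian w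
    have h2 : star (star w ⬝ᵥ w) = star w ⬝ᵥ w := by
      simp [dotProduct, Finset.mul_sum, mul_comm]
    exact Matrix.IsHermitian.sub (by simp [Matrix.IsHermitian, conjTranspose_smul, h2]) h1
  refine PosSemidef.of_dotProduct_mulVec_nonneg hermM fun x => ?_
  set x' : EuclideanSpace ℂ (Fin d) := (WithLp.equiv 2 _).symm x with hx'
  have hvm : Matrix.vecMulVec w (star w) *ᵥ x = (star w ⬝ᵥ x) • w := aux_vecMulVec_mulVec _ _ _
  have expand : star x ⬝ᵥ (((star w ⬝ᵥ w) • 1 - Matrix.vecMulVec w (star w)) *ᵥ x)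
      = (star w ⬝ᵥ w) * (star x ⬝ᵥ x) - (star w ⬝ᵥ x) * (star x ⬝ᵥ w) := by
    rw [sub_mulVec, dotProduct_sub, hvm, smul_mulVec, one_mulVec, dotProduct_smul,
      dotProduct_smul]
    simp only [smul_eq_mul]
  rw [expand]
  have hww : star w ⬝ᵥ w = ((‖w'‖ ^ 2 : ℝ) : ℂ) := by
    rw [← aux_inner_equiv_symm, inner_self_eq_norm_sq_to_K]; norm_cast
  have hxx : star x ⬝ᵥ x = ((‖x'‖ ^ 2 : ℝ) : ℂ) := by
    rw [← aux_inner_equiv_symm, inner_self_eq_norm_sq_to_K]; norm_cast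
  have hwx : star w ⬝ᵥ x = (inner ℂ w' x' : ℂ) := (aux_inner_equiv_symm w x).symm
  have hxw : star x ⬝ᵥ w = star (star w ⬝ᵥ x) := aux_dot_star_comm w x
  rw [hww, hxx, hwx, hxw, hwx]
  have : (inner ℂ w' x' : ℂ) * star (inner ℂ w' x' : ℂ) = ((‖(inner ℂ w' x' : ℂ)‖ ^ 2 : ℝ) : ℂ) := by
    rw [Complex.star_def, Complex.mul_conj]
    norm_cast
    rw [Complex.normSq_eq_norm_sq]
  rw [this, ← Complex.ofReal_mul, ← Complex.ofReal_sub, Complex.zero_le_real, sub_nonneg]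
  have hcs := norm_inner_le_norm (𝕜 := ℂ) w' x'
  calc ‖(inner ℂ w' x' : ℂ)‖ ^ 2 ≤ (‖w'‖ * ‖x'‖) ^ 2 := by
        have := norm_nonneg (inner ℂ w' x' : ℂ)
        nlinarith
    _ = ‖w'‖ ^ 2 * ‖x'‖ ^ 2 := by ring

lemma aux_trace_psd_nonneg {d : ℕ} {A : Matrix (Fin d) (Fin d) ℂ} (hA : A.PosSemidef) :
    0 ≤ A.trace := by
  rw [Matrix.trace]
  apply Finset.sum_nonneg
  intro i _
  have := hA.dotProduct_mulVec_nonneg (Pi.single i 1)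
  simpa [Matrix.mulVec_single, dotProduct, Pi.single_apply, apply_ite] using this

open scoped MatrixOrder in
lemma aux_trace_mul_psd_nonneg {d : ℕ} {A B : Matrix (Fin d) (Fin d) ℂ}
    (hA : A.PosSemidef) (hB : B.PosSemidef) : 0 ≤ (A * B).trace := by
  obtain ⟨C, rfl⟩ := CStarAlgebra.nonneg_iff_eq_star_mul_self.mp hB.nonneg
  rw [Matrix.star_eq_conjTranspose]
  have h1 : (A * (Cᴴ * C)).trace = (C * A * Cᴴ).trace := by
    rw [← mul_assoc]; exact Matrix.trace_mul_cycle A Cᴴ C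
  rw [h1]
  exact aux_trace_psd_nonneg (hA.mul_mul_conjTranspose_same C)

set_option maxHeartbeats 1600000 in
/-- Optimality of the SIM for pure GU state sets: for a pure geometrically
uniform state set |φ_i⟩ = U_i|φ⟩ with equal priors 1/m and invertible Δ, for
every β with 1 − nλ_min ≤ β < 1, the SIM with γ = √((1−β)/n) is a measurement
with P_I = β maximizing P_D among all measurements with P_I = β. -/
theorem stmt_13 {n m : ℕ} (hm : 0 < m)
    (U : Fin m → Matrix (Fin n) (Fin n) ℂ)
    (hUunit : ∀ i, U i * (U i)ᴴ = 1)
    (hUinj : Function.Injective U)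
    (hU1 : U ⟨0, hm⟩ = 1)
    (hUmul : ∀ i j, ∃ k, U i * U j = U k)
    (hUinv : ∀ i, ∃ j, (U i)ᴴ = U j)
    (φ : Fin n → ℂ) (hφunit : star φ ⬝ᵥ φ = 1)
    (φv : Fin m → (Fin n → ℂ)) (hφv : ∀ i, φv i = U i *ᵥ φ)
    (Δ : Matrix (Fin n) (Fin n) ℂ)
    (hΔ : Δ = (1 / (m : ℂ)) • ∑ i, Matrix.vecMulVec (φv i) (star (φv i)))
    (hΔinv : IsUnit Δ.det) (hΔH : Δ.IsHermitian)
    (lam : ℝ) (hlam : IsLeast (Set.range hΔH.eigenvalues) lam)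
    (β : ℝ) (hβ1 : 1 - (n : ℝ) * lam ≤ β) (hβ2 : β < 1)
    (γ : ℝ) (hγ : γ = Real.sqrt ((1 - β) / n))
    (ψ : Fin m → (Fin n → ℂ))
    (hψ : ∀ i, ψ i = (Real.sqrt (1 / m) : ℂ) • φv i)
    (μ : Fin m → (Fin n → ℂ))
    (hμ : ∀ i, μ i = (γ : ℂ) • (Δ⁻¹ *ᵥ ψ i))
    (S : Fin m → Matrix (Fin n) (Fin n) ℂ)
    (hS : ∀ i, S i = Matrix.vecMulVec (μ i) (star (μ i)))
    (S0 : Matrix (Fin n) (Fin n) ℂ) (hS0 : S0 = 1 - ∑ i, S i) :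
    S0.PosSemidef ∧ (Δ * S0).trace = (β : ℂ) ∧
    ∀ (N0 : Matrix (Fin n) (Fin n) ℂ) (N : Fin m → Matrix (Fin n) (Fin n) ℂ),
      N0.PosSemidef → (∀ i, (N i).PosSemidef) → (N0 + ∑ i, N i = 1) →
      (Δ * N0).trace = (β : ℂ) →
      (1 / m : ℝ) * ∑ i, (star (φv i) ⬝ᵥ (N i *ᵥ φv i)).re
        ≤ (1 / m : ℝ) * ∑ i, (star (φv i) ⬝ᵥ (S i *ᵥ φv i)).re := by
  -- n cannot be zero
  rcases Nat.eq_zero_or_pos n with hn0 | hn0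
  · exfalso; subst hn0; simp [dotProduct] at hφunit
  have hmC : (m : ℂ) ≠ 0 := Nat.cast_ne_zero.mpr hm.ne'
  have hmR : (m : ℝ) ≠ 0 := Nat.cast_ne_zero.mpr hm.ne'
  have hnR : (n : ℝ) ≠ 0 := Nat.cast_ne_zero.mpr hn0.ne'
  have hUU : ∀ i, (U i)ᴴ * U i = 1 := fun i => mul_eq_one_comm.mp (hUunit i)
  have unit_dot : ∀ (i : Fin m) (x y : Fin n → ℂ),
      star (U i *ᵥ x) ⬝ᵥ (U i *ᵥ y) = star x ⬝ᵥ y := by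
    intro i x y
    rw [star_mulVec, dotProduct_mulVec, vecMul_vecMul, hUU i, vecMul_one]
  have hsum : ∑ i, Matrix.vecMulVec (φv i) (star (φv i)) = (m : ℂ) • Δ := by
    rw [hΔ, smul_smul, mul_one_div, div_self hmC, one_smul]
  have hΔΔinv : Δ * Δ⁻¹ = 1 := Matrix.mul_nonsing_inv _ hΔinv
  have hΔinvΔ : Δ⁻¹ * Δ = 1 := Matrix.nonsing_inv_mul _ hΔinv
  have hΔinvH : Δ⁻¹ᴴ = Δ⁻¹ := hΔH.inv
  -- commutation of U i with Δ
  have hcomm : ∀ i, U i * Δ = Δ * U i := by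
    intro i
    have hconj : U i * Δ * (U i)ᴴ = Δ := by
      choose k hk using hUmul i
      have hkinj : Function.Injective k := by
        intro a b hab
        have h1 : U i * U a = U i * U b := by rw [hk, hk, hab]
        have h2 : U a = U b := by
          have := congrArg (fun M => (U i)ᴴ * M) h1
          simpa [← mul_assoc, hUU i] using this
        exact hUinj h2
      have hkbij : Function.Bijective k := Finite.injective_iff_bijective.mp hkinj
      have hterm : ∀ j, U i * Matrix.vecMulVec (φv j) (star (φv j)) * (U i)ᴴ
          = Matrix.vecMulVec (φv (k j)) (star (φv (k j))) := by
        intro j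
        rw [aux_mul_vecMulVec_mul]
        have : U i *ᵥ φv j = φv (k j) := by
          rw [hφv j, hφv (k j), mulVec_mulVec, hk]
        rw [this]
      calc U i * Δ * (U i)ᴴ
          = (1 / (m : ℂ)) • ∑ j, (U i * Matrix.vecMulVec (φv j) (star (φv j)) * (U i)ᴴ) := by
            rw [hΔ, Matrix.mul_smul, Matrix.smul_mul, Finset.mul_sum, Finset.sum_mul]
        _ = (1 / (m : ℂ)) • ∑ j, Matrix.vecMulVec (φv (k j)) (star (φv (k j))) := by
            simp_rw [hterm]
        _ = Δ := by
            rw [hkbij.sum_comp (fun j => Matrix.vecMulVec (φv j) (star (φv j))), ← hΔ]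
    have := congrArg (fun M => M * U i) hconj
    simpa [mul_assoc, hUU i] using this
  have hcommInv : ∀ i, U i * Δ⁻¹ = Δ⁻¹ * U i := by
    intro i
    have h1 : Δ⁻¹ * (U i * Δ) * Δ⁻¹ = Δ⁻¹ * (Δ * U i) * Δ⁻¹ := by rw [hcomm i]
    calc U i * Δ⁻¹ = Δ⁻¹ * Δ * U i * Δ⁻¹ := by rw [hΔinvΔ, one_mul]
      _ = Δ⁻¹ * (Δ * U i) * Δ⁻¹ := by rw [mul_assoc Δ⁻¹ Δ (U i)]
      _ = Δ⁻¹ * (U i * Δ) * Δ⁻¹ := h1.symm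
      _ = Δ⁻¹ * U i * (Δ * Δ⁻¹) := by simp only [mul_assoc]
      _ = Δ⁻¹ * U i := by rw [hΔΔinv, mul_one]
  have keyc : ∀ i, star (φv i) ⬝ᵥ (Δ⁻¹ *ᵥ φv i) = star φ ⬝ᵥ (Δ⁻¹ *ᵥ φ) := by
    intro i
    rw [hφv i]
    have h1 : Δ⁻¹ *ᵥ (U i *ᵥ φ) = U i *ᵥ (Δ⁻¹ *ᵥ φ) := by
      rw [mulVec_mulVec, mulVec_mulVec, hcommInv i]
    rw [h1, unit_dot]
  have key_sum : ∑ i : Fin m, star (φv i) ⬝ᵥ (Δ⁻¹ *ᵥ φv i) = (m : ℂ) * n := by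
    have : ∑ i : Fin m, star (φv i) ⬝ᵥ (Δ⁻¹ *ᵥ φv i)
        = (Δ⁻¹ * ((m : ℂ) • Δ)).trace := by
      rw [← hsum, Finset.mul_sum, Matrix.trace_sum]
      exact Finset.sum_congr rfl fun i _ => (aux_trace_mul_vecMulVec _ _).symm
    rw [this, Matrix.mul_smul, hΔinvΔ, Matrix.trace_smul, Matrix.trace_one]
    simp
  have keyn : star φ ⬝ᵥ (Δ⁻¹ *ᵥ φ) = (n : ℂ) := by
    have h1 : (m : ℂ) * (star φ ⬝ᵥ (Δ⁻¹ *ᵥ φ)) = (m : ℂ) * n := by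
      rw [← key_sum]
      rw [Finset.sum_congr rfl fun i _ => keyc i]
      simp [Finset.sum_const, mul_comm]
    exact mul_left_cancel₀ hmC h1
  have key1 : ∀ i, star (φv i) ⬝ᵥ (Δ⁻¹ *ᵥ φv i) = (n : ℂ) := fun i => (keyc i).trans keyn
  -- trace of Δ is 1
  have traceΔ : Δ.trace = 1 := by
    have h1 : ∀ i : Fin m, (Matrix.vecMulVec (φv i) (star (φv i))).trace = 1 := by
      intro i
      rw [aux_trace_vecMulVec, hφv i, unit_dot, hφunit]
    rw [hΔ, Matrix.trace_smul, Matrix.trace_sum]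
    rw [Finset.sum_congr rfl fun i _ => h1 i]
    simp only [Finset.sum_const, Finset.card_univ, Fintype.card_fin, nsmul_eq_mul, mul_one,
      smul_eq_mul, one_div]
    exact inv_mul_cancel₀ hmC
  -- Δ is positive semidefinite / definite
  have hΔpsd : Δ.PosSemidef := by
    have h0 : (∑ i, Matrix.vecMulVec (φv i) (star (φv i))).PosSemidef := by
      exact Finset.sum_induction (fun i => Matrix.vecMulVec (φv i) (star (φv i)))
        Matrix.PosSemidef (fun a b ha hb => ha.add hb)
        (Matrix.PosSemidef.zero) (fun i _ => aux_vecMulVec_posSemidef _)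
    refine PosSemidef.of_dotProduct_mulVec_nonneg hΔH fun x => ?_
    rw [hΔ, smul_mulVec, dotProduct_smul]
    have hnn : (0 : ℂ) ≤ 1 / (m : ℂ) := by
      have : ((1 / m : ℝ) : ℂ) = 1 / (m : ℂ) := by push_cast; ring
      rw [← this, Complex.zero_le_real]
      positivity
    exact mul_nonneg hnn (h0.dotProduct_mulVec_nonneg x)
  have hΔpd : Δ.PosDef := by
    refine PosDef.of_dotProduct_mulVec_pos hΔH fun x hx => ?_
    rcases lt_or_eq_of_le (hΔpsd.dotProduct_mulVec_nonneg x) with h | h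
    · exact h
    · exfalso
      have hzero : Δ *ᵥ x = 0 := (hΔpsd.dotProduct_mulVec_zero_iff x).mp h.symm
      have hinj : Function.Injective Δ.mulVec :=
        Matrix.mulVec_injective_iff_isUnit.mpr ((Matrix.isUnit_iff_isUnit_det Δ).mpr hΔinv)
      exact hx (hinj (by rw [hzero, Matrix.mulVec_zero]))
  -- lam facts
  obtain ⟨⟨i0, hi0⟩, hlb⟩ := hlam
  have hlampos : 0 < lam := hi0 ▸ hΔpd.eigenvalues_pos i0
  set c : ℝ := (1 - β) / n with hc
  have hc0 : 0 ≤ c := by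
    apply div_nonneg (by linarith) (Nat.cast_nonneg n)
  have hclam : c ≤ lam := by
    rw [hc, div_le_iff₀ (by positivity)]
    nlinarith
  have hγsq : γ ^ 2 = c := by
    rw [hγ, hc]; exact Real.sq_sqrt (by positivity)
  -- spectral setup
  have evpos : ∀ i, 0 < hΔH.eigenvalues i := hΔpd.eigenvalues_pos
  have evlam : ∀ i, lam ≤ hΔH.eigenvalues i := fun i => hlb ⟨i, rfl⟩
  set V : Matrix (Fin n) (Fin n) ℂ := (hΔH.eigenvectorUnitary : Matrix (Fin n) (Fin n) ℂ) with hV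
  have hV1 : star V * V = 1 := (Unitary.mem_iff.mp hΔH.eigenvectorUnitary.2).1
  have hV2 : V * star V = 1 := (Unitary.mem_iff.mp hΔH.eigenvectorUnitary.2).2
  have spec : Δ = V * Matrix.diagonal (RCLike.ofReal ∘ hΔH.eigenvalues) * star V :=
    hΔH.spectral_theorem
  set Dinv : Matrix (Fin n) (Fin n) ℂ :=
    Matrix.diagonal (fun i => ((hΔH.eigenvalues i : ℂ))⁻¹) with hDinv
  have hDD : Matrix.diagonal (RCLike.ofReal ∘ hΔH.eigenvalues) * Dinv = 1 := by
    rw [hDinv, Matrix.diagonal_mul_diagonal]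
    ext i j
    by_cases h : i = j
    · subst h
      simp [Matrix.diagonal_apply_eq, Matrix.one_apply_eq,
        mul_inv_cancel₀ (Complex.ofReal_ne_zero.mpr (evpos i).ne')]
    · simp [Matrix.diagonal_apply_ne _ h, Matrix.one_apply_ne h]
  have hinvEq : Δ⁻¹ = V * Dinv * star V := by
    apply Matrix.inv_eq_right_inv
    rw [spec]
    have h1 : star V * (V * (Dinv * star V)) = Dinv * star V := by
      rw [← mul_assoc, hV1, one_mul]
    have h2 : Matrix.diagonal (RCLike.ofReal ∘ hΔH.eigenvalues) * (Dinv * star V) = star V := by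
      rw [← mul_assoc, hDD, one_mul]
    simp only [mul_assoc]
    rw [h1, h2, hV2]
  -- sum of SIM operators
  have hμ' : ∀ i, μ i = ((γ * Real.sqrt (1 / m) : ℝ) : ℂ) • (Δ⁻¹ *ᵥ φv i) := by
    intro i
    rw [hμ i, hψ i, mulVec_smul, smul_smul]
    push_cast
    ring_nf
  have ha2 : ((γ * Real.sqrt (1 / m) : ℝ)) ^ 2 = c / m := by
    rw [mul_pow, hγsq, Real.sq_sqrt (by positivity)]
    ring
  have hSi : ∀ i, S i = (((c / m : ℝ)) : ℂ) •
      (Δ⁻¹ * Matrix.vecMulVec (φv i) (star (φv i)) * Δ⁻¹) := by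
    intro i
    rw [hS i, hμ' i]
    have hstar : star (((γ * Real.sqrt (1 / m) : ℝ) : ℂ) • (Δ⁻¹ *ᵥ φv i))
        = ((γ * Real.sqrt (1 / m) : ℝ) : ℂ) • star (Δ⁻¹ *ᵥ φv i) := by
      rw [star_smul, Complex.star_def, Complex.conj_ofReal]
    rw [hstar]
    have hvv : Matrix.vecMulVec
        (((γ * Real.sqrt (1 / m) : ℝ) : ℂ) • (Δ⁻¹ *ᵥ φv i))
        (((γ * Real.sqrt (1 / m) : ℝ) : ℂ) • star (Δ⁻¹ *ᵥ φv i))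
        = (((γ * Real.sqrt (1 / m) : ℝ) : ℂ) * ((γ * Real.sqrt (1 / m) : ℝ) : ℂ)) •
          Matrix.vecMulVec (Δ⁻¹ *ᵥ φv i) (star (Δ⁻¹ *ᵥ φv i)) := by
      ext a b
      simp only [vecMulVec_apply, Pi.smul_apply, smul_eq_mul, Matrix.smul_apply]
      ring
    rw [hvv]
    have : Δ⁻¹ * Matrix.vecMulVec (φv i) (star (φv i)) * Δ⁻¹
        = Matrix.vecMulVec (Δ⁻¹ *ᵥ φv i) (star (Δ⁻¹ *ᵥ φv i)) := by
      rw [← aux_mul_vecMulVec_mul Δ⁻¹ (φv i), hΔinvH]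
    rw [this]
    congr 1
    rw [← Complex.ofReal_mul, ← pow_two, ha2]
  have sumS : ∑ i, S i = ((c : ℝ) : ℂ) • Δ⁻¹ := by
    rw [Finset.sum_congr rfl fun i _ => hSi i, ← Finset.smul_sum]
    have h1 : ∑ i, Δ⁻¹ * Matrix.vecMulVec (φv i) (star (φv i)) * Δ⁻¹
        = Δ⁻¹ * (∑ i, Matrix.vecMulVec (φv i) (star (φv i))) * Δ⁻¹ := by
      rw [Finset.mul_sum, Finset.sum_mul]
    rw [h1, hsum, Matrix.mul_smul, Matrix.smul_mul, hΔinvΔ, one_mul, smul_smul]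
    congr 1
    push_cast
    field_simp
  have S0eq : S0 = 1 - ((c : ℝ) : ℂ) • Δ⁻¹ := by rw [hS0, sumS]
  -- S0 positive semidefinite
  have hS0psd : S0.PosSemidef := by
    rw [S0eq]
    have hrepr : (1 : Matrix (Fin n) (Fin n) ℂ) - ((c : ℝ) : ℂ) • Δ⁻¹
        = V * Matrix.diagonal (fun i => 1 - ((c : ℝ) : ℂ) * ((hΔH.eigenvalues i : ℂ))⁻¹) * Vᴴ := by
      have hdiag : Matrix.diagonal (fun i => 1 - ((c : ℝ) : ℂ) * ((hΔH.eigenvalues i : ℂ))⁻¹)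
          = 1 - ((c : ℝ) : ℂ) • Dinv := by
        rw [hDinv, ← Matrix.diagonal_one, ← Matrix.diagonal_smul, Matrix.diagonal_sub]
        congr 1
      rw [hdiag, Matrix.mul_sub, Matrix.sub_mul, Matrix.mul_smul, Matrix.smul_mul, mul_one,
        ← Matrix.star_eq_conjTranspose, hV2, hinvEq]
    rw [hrepr, ← Matrix.star_eq_conjTranspose]
    have hdpsd : (Matrix.diagonal
        (fun i => 1 - ((c : ℝ) : ℂ) * ((hΔH.eigenvalues i : ℂ))⁻¹)).PosSemidef := by
      rw [Matrix.posSemidef_diagonal_iff]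
      intro i
      have h1 : ((c : ℝ) : ℂ) * ((hΔH.eigenvalues i : ℂ))⁻¹
          = ((c * (hΔH.eigenvalues i)⁻¹ : ℝ) : ℂ) := by push_cast; ring
      rw [h1, show (1 : ℂ) = ((1 : ℝ) : ℂ) by norm_cast, ← Complex.ofReal_sub,
        Complex.zero_le_real, sub_nonneg]
      rw [← div_eq_mul_inv, div_le_one (evpos i)]
      exact hclam.trans (evlam i)
    have := hdpsd.mul_mul_conjTranspose_same V
    rwa [← Matrix.star_eq_conjTranspose] at this
  refine ⟨hS0psd, ?_, ?_⟩
  -- trace condition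
  · rw [S0eq, Matrix.mul_sub, Matrix.mul_smul, hΔΔinv, mul_one, Matrix.trace_sub,
      Matrix.trace_smul, traceΔ, Matrix.trace_one]
    have hcn : ((c : ℝ) : ℂ) * (n : ℂ) = 1 - (β : ℂ) := by
      have h' : (c : ℝ) * n = 1 - β := by rw [hc]; field_simp
      calc ((c : ℝ) : ℂ) * (n : ℂ) = (((c * n) : ℝ) : ℂ) := by push_cast; ring
        _ = 1 - (β : ℂ) := by rw [h']; push_cast; ring
    simp only [Fintype.card_fin, smul_eq_mul]
    rw [hcn]
    ring
  -- optimality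
  · intro N0 N hN0 hN hsumN htr
    -- square root of Δ
    set R := V * Matrix.diagonal (fun i => ((Real.sqrt (hΔH.eigenvalues i) : ℝ) : ℂ)) * star V
      with hR
    have hRR : R * R = Δ := by
      have h1 : Matrix.diagonal (fun i => ((Real.sqrt (hΔH.eigenvalues i) : ℝ) : ℂ)) *
          (star V * (V * (Matrix.diagonal (fun i => ((Real.sqrt (hΔH.eigenvalues i) : ℝ) : ℂ)) *
            star V))) = Matrix.diagonal (RCLike.ofReal ∘ hΔH.eigenvalues) * star V := by
        rw [← mul_assoc (star V), hV1, one_mul, ← mul_assoc, Matrix.diagonal_mul_diagonal]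
        congr 2
        ext i
        simp [← Complex.ofReal_mul, Real.mul_self_sqrt (evpos i).le]
      refine Eq.trans ?_ spec.symm
      rw [hR]
      simp only [mul_assoc]
      rw [h1]
    have hRH : Rᴴ = R := by
      simp [hR, Matrix.conjTranspose_mul, Matrix.star_eq_conjTranspose,
        Matrix.diagonal_conjTranspose, mul_assoc, Pi.star_def, Complex.star_def]
    clear_value R
    have hRdet : IsUnit R.det := by
      have hdet : R.det * R.det = Δ.det := by rw [← Matrix.det_mul, hRR]
      exact isUnit_of_mul_isUnit_left (hdet ▸ hΔinv)
    have hRRinv : R * R⁻¹ = 1 := Matrix.mul_nonsing_inv _ hRdet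
    have hRinvH : R⁻¹ᴴ = R⁻¹ := by rw [Matrix.conjTranspose_nonsing_inv, hRH]
    have hRinvRinv : R⁻¹ * R⁻¹ = Δ⁻¹ := by rw [← Matrix.mul_inv_rev, hRR]
    -- key PSD bound: n•Δ - |φ_i⟩⟨φ_i| ⪰ 0
    have claim1 : ∀ i, ((n : ℂ) • Δ - Matrix.vecMulVec (φv i) (star (φv i))).PosSemidef := by
      intro i
      set w := R⁻¹ *ᵥ φv i with hw'
      have hw : R *ᵥ w = φv i := by rw [hw', mulVec_mulVec, hRRinv, one_mulVec]
      have hwn : star w ⬝ᵥ w = (n : ℂ) := by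
        rw [hw', star_mulVec, hRinvH, dotProduct_mulVec, vecMul_vecMul, hRinvRinv,
          ← dotProduct_mulVec, key1 i]
      have hM := aux_cs w
      rw [hwn] at hM
      have hconj := hM.mul_mul_conjTranspose_same R
      have heq : R * (((n : ℂ) • 1 - Matrix.vecMulVec w (star w))) * Rᴴ
          = (n : ℂ) • Δ - Matrix.vecMulVec (φv i) (star (φv i)) := by
        rw [Matrix.mul_sub, Matrix.sub_mul, aux_mul_vecMulVec_mul, hw]
        congr 1
        rw [Matrix.mul_smul, mul_one, Matrix.smul_mul, hRH, hRR]
      rw [heq] at hconj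
      exact hconj
    -- value of the SIM
    have RHSval : ∀ i, star (φv i) ⬝ᵥ (S i *ᵥ φv i) = (((1 - β) * n / m : ℝ) : ℂ) := by
      intro i
      rw [hS i, aux_vecMulVec_mulVec, dotProduct_smul]
      have h1 : star (φv i) ⬝ᵥ μ i = ((γ * Real.sqrt (1 / m) : ℝ) : ℂ) * n := by
        rw [hμ' i, dotProduct_smul, key1 i, smul_eq_mul]
      have h2 : star (μ i) ⬝ᵥ φv i = ((γ * Real.sqrt (1 / m) : ℝ) : ℂ) * n := by
        rw [hμ' i, star_smul, smul_dotProduct, Complex.star_def, Complex.conj_ofReal,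
          star_mulVec, hΔinvH, ← dotProduct_mulVec, key1 i, smul_eq_mul]
      rw [h1, h2, smul_eq_mul]
      have : (((γ * Real.sqrt (1 / m) : ℝ) : ℂ) * ((γ * Real.sqrt (1 / m) : ℝ) : ℂ))
          = ((c / m : ℝ) : ℂ) := by
        rw [← Complex.ofReal_mul, ← pow_two, ha2]
      calc ((γ * Real.sqrt (1 / m) : ℝ) : ℂ) * (n : ℂ) *
            (((γ * Real.sqrt (1 / m) : ℝ) : ℂ) * (n : ℂ))
          = (((γ * Real.sqrt (1 / m) : ℝ) : ℂ) * ((γ * Real.sqrt (1 / m) : ℝ) : ℂ)) *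
            ((n : ℂ) * (n : ℂ)) := by ring
        _ = ((c / m : ℝ) : ℂ) * ((n : ℂ) * (n : ℂ)) := by rw [this]
        _ = (((1 - β) * n / m : ℝ) : ℂ) := by
            rw [hc]; push_cast; field_simp
    -- bound for an arbitrary measurement
    have hsumN' : ∑ i, N i = 1 - N0 := eq_sub_of_add_eq' hsumN
    have hLHS : ∑ i, (star (φv i) ⬝ᵥ (N i *ᵥ φv i)).re ≤ (1 - β) * n := by
      have hterm : ∀ i, (star (φv i) ⬝ᵥ (N i *ᵥ φv i)).re
          ≤ ((N i * ((n : ℂ) • Δ)).trace).re := by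
        intro i
        have h0 := aux_trace_mul_psd_nonneg (hN i) (claim1 i)
        have hsplit : (N i * ((n : ℂ) • Δ - Matrix.vecMulVec (φv i) (star (φv i)))).trace
            = (N i * ((n : ℂ) • Δ)).trace - (N i * Matrix.vecMulVec (φv i) (star (φv i))).trace := by
          rw [Matrix.mul_sub, Matrix.trace_sub]
        rw [hsplit] at h0
        have h1 : (star (φv i) ⬝ᵥ (N i *ᵥ φv i))
            = (N i * Matrix.vecMulVec (φv i) (star (φv i))).trace :=
          (aux_trace_mul_vecMulVec _ _).symm
        rw [h1]
        have := (Complex.le_def.mp h0).1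
        simp only [Complex.zero_re, Complex.sub_re] at this
        linarith
      calc ∑ i, (star (φv i) ⬝ᵥ (N i *ᵥ φv i)).re
          ≤ ∑ i, ((N i * ((n : ℂ) • Δ)).trace).re :=
            Finset.sum_le_sum fun i _ => hterm i
        _ = ((∑ i, N i) * ((n : ℂ) • Δ)).trace.re := by
            rw [Finset.sum_mul, Matrix.trace_sum, Complex.re_sum]
        _ = (1 - β) * n := by
            rw [hsumN', Matrix.sub_mul, one_mul, Matrix.trace_sub]
            simp only [Matrix.mul_smul, Matrix.trace_smul, traceΔ]
            rw [Matrix.trace_mul_comm, htr]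
            rw [show ((n : ℂ) • (1 : ℂ) - (n : ℂ) • (β : ℂ)) = (((1 - β) * n : ℝ) : ℂ) by
              simp only [smul_eq_mul]; push_cast; ring]
            rw [Complex.ofReal_re]
    have hRHS : ∑ i, (star (φv i) ⬝ᵥ (S i *ᵥ φv i)).re = (1 - β) * n := by
      rw [Finset.sum_congr rfl fun i _ => by rw [RHSval i]]
      simp only [Complex.ofReal_re, Finset.sum_const, Finset.card_univ, Fintype.card_fin,
        nsmul_eq_mul]
      field_simp
    rw [hRHS]
    exact mul_le_mul_of_nonneg_left hLHS (by positivity)
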